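/- Let a ∈ F satisfy a^{q+1} = 1 and let b ∈ F satisfy b^q + b = 0. Then the number of elements d ∈ F such that −a·d^q + a⁻¹·d = b is exactly q. -/

import Mathlib

open Polynomial in
lemma sl2_aux_root_bound {F : Type*} [Field F] [Fintype F] {c : F} (e : F) (hc : c ≠ 0)
    {n : ℕ} (hn : 2 ≤ n) : {x : F | c * x ^ n + e * x = 0}.ncard ≤ n := by
  classical
  set P : F[X] := C c * X ^ n + C e * X with hP
  have h1n : ¬ (1 = n) := by omega
  have hP0 : P ≠ 0 := by
    intro h
    have hco : P.coeff n = c := by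
      simp [hP, coeff_X, coeff_X_pow, h1n]
    rw [h] at hco
    simp at hco
    exact hc hco.symm
  have hsub : {x : F | c * x ^ n + e * x = 0} ⊆ ↑P.roots.toFinset := by
    intro x hx
    simp only [Set.mem_setOf_eq] at hx
    simp [Polynomial.mem_roots, hP0, Polynomial.IsRoot, hP, hx]
    exact fun h => hP0 (hP.trans h)
  calc {x : F | c * x ^ n + e * x = 0}.ncard
      ≤ (↑P.roots.toFinset : Set F).ncard := Set.ncard_le_ncard hsub (Set.toFinite _)
    _ = P.roots.toFinset.card := Set.ncard_coe_finset _
    _ ≤ Multiset.card P.roots := Multiset.toFinset_card_le _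
    _ ≤ P.natDegree := P.card_roots'
    _ ≤ n := by
        refine (natDegree_add_le _ _).trans (max_le ?_ ?_)
        · exact (natDegree_C_mul_le _ _).trans (by simp)
        · exact (natDegree_C_mul_le _ _).trans (by simp; omega)

/-- Let `q` be a prime power and `F` a finite field with `q²` elements.  If
`a ∈ F` satisfies `a^(q+1) = 1` and `b ∈ F` satisfies `b^q + b = 0`, then the
number of `d ∈ F` with `-a·d^q + a⁻¹·d = b` is exactly `q`. -/
theorem sl2_solution_count {F : Type*} [Field F] [Fintype F] (q : ℕ)
    (hq : IsPrimePow q) (hF : Fintype.card F = q ^ 2) (a b : F)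
    (ha : a ^ (q + 1) = 1) (hb : b ^ q + b = 0) :
    {d : F | -(a * d ^ q) + a⁻¹ * d = b}.ncard = q := by
  classical
  have hq2 : 2 ≤ q := hq.two_le
  have hq0 : 0 < q := by omega
  -- characteristic facts
  obtain ⟨p, k, hp, hk, hqpk⟩ := hq
  have hpp : p.Prime := hp.nat_prime
  have hrp : (ringChar F).Prime := CharP.char_is_prime F (ringChar F)
  haveI := Fact.mk hrp
  obtain ⟨n, -, hcard⟩ := FiniteField.card F (ringChar F)
  have hpr : p = ringChar F := by
    have hdvd : p ∣ (ringChar F) ^ (n : ℕ) := by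
      rw [← hcard, hF, ← hqpk, ← pow_mul]
      exact dvd_pow_self p (by positivity)
    exact (Nat.prime_dvd_prime_iff_eq hpp hrp).mp (hpp.dvd_of_dvd_pow hdvd)
  haveI : CharP F p := hpr ▸ ringChar.charP F
  haveI := Fact.mk hpp
  have hfrob : ∀ x y : F, (x + y) ^ q = x ^ q + y ^ q := by
    intro x y
    rw [← hqpk]
    exact add_pow_char_pow x y p k
  -- basic facts about a
  have ha0 : a ≠ 0 := by
    intro h; rw [h, zero_pow (by omega)] at ha; exact zero_ne_one ha
  have haq : a ^ q = a⁻¹ := eq_inv_of_mul_eq_one_left (by rw [← pow_succ]; exact ha)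
  have haiq : (a⁻¹) ^ q = a := by rw [inv_pow, haq, inv_inv]
  have hdq : ∀ d : F, (d ^ q) ^ q = d := by
    intro d
    rw [← pow_mul, show q * q = q ^ 2 by ring, ← hF, FiniteField.pow_card]
  -- the additive map
  set φ : F →+ F := AddMonoidHom.mk' (fun d => -(a * d ^ q) + a⁻¹ * d)
    (by intro x y; rw [hfrob]; ring) with hφ
  have hφd : ∀ d : F, φ d = -(a * d ^ q) + a⁻¹ * d := fun d => rfl
  -- values of φ lie in B
  set B : Set F := {x : F | x ^ q + x = 0} with hB
  have hrange : (Set.range φ) ⊆ B := by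
    rintro x ⟨d, rfl⟩
    have hneg : ∀ x : F, (-x) ^ q = -(x ^ q) := fun x => by
      have h := hfrob x (-x)
      rw [add_neg_cancel, zero_pow (by omega : q ≠ 0)] at h
      linear_combination -h
    simp only [hB, Set.mem_setOf_eq, hφd]
    rw [hfrob, hneg, mul_pow, mul_pow, hdq, haq, haiq]
    ring
  -- cardinalities
  have hKset : ((φ.ker : AddSubgroup F) : Set F) = {d : F | (-a) * d ^ q + a⁻¹ * d = 0} := by
    ext d
    simp only [SetLike.mem_coe, AddMonoidHom.mem_ker, hφd, Set.mem_setOf_eq, neg_mul]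
  have hKle : Nat.card φ.ker ≤ q := by
    rw [show Nat.card φ.ker = ((φ.ker : AddSubgroup F) : Set F).ncard from (Nat.card_coe_set_eq _).symm ▸ rfl, hKset]
    exact sl2_aux_root_bound a⁻¹ (neg_ne_zero.mpr ha0) hq2
  have hBle : B.ncard ≤ q := by
    have : B = {x : F | (1 : F) * x ^ q + 1 * x = 0} := by simp [hB]
    rw [this]
    exact sl2_aux_root_bound 1 one_ne_zero hq2
  have hRncard : Nat.card φ.range = (Set.range φ).ncard := by
    rw [← AddMonoidHom.coe_range]
    exact Nat.card_coe_set_eq (φ.range : Set F)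
  have hRle : Nat.card φ.range ≤ q := by
    rw [hRncard]
    exact le_trans (Set.ncard_le_ncard hrange (Set.toFinite _)) hBle
  have hmul : q * q = Nat.card φ.range * Nat.card φ.ker := by
    have h1 := AddSubgroup.card_eq_card_quotient_mul_card_addSubgroup (φ.ker)
    have h2 : Nat.card (F ⧸ φ.ker) = Nat.card φ.range :=
      Nat.card_congr (QuotientAddGroup.quotientKerEquivRange φ).toEquiv
    rw [h2] at h1
    rw [← h1, Nat.card_eq_fintype_card, hF]; ring
  have hKq : Nat.card φ.ker = q := by
    refine le_antisymm hKle ?_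
    have : q * q ≤ q * Nat.card φ.ker := by
      calc q * q = Nat.card φ.range * Nat.card φ.ker := hmul
        _ ≤ q * Nat.card φ.ker := Nat.mul_le_mul_right _ hRle
    exact Nat.le_of_mul_le_mul_left this hq0
  have hRq : Nat.card φ.range = q := by
    have h := hmul
    rw [hKq] at h
    exact (Nat.eq_of_mul_eq_mul_right hq0 h.symm)
  -- range = B, so b is in the range
  have hRB : Set.range φ = B := by
    refine Set.eq_of_subset_of_ncard_le hrange ?_ (Set.toFinite _)
    have : (Set.range φ).ncard = q := by rw [← hRncard]; exact hRq
    omega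
  have hbmem : b ∈ Set.range φ := hRB ▸ hb
  obtain ⟨d₀, hd₀⟩ := hbmem
  -- the fiber is a coset of the kernel
  have hfiber : {d : F | -(a * d ^ q) + a⁻¹ * d = b} = (· + d₀) '' {d : F | φ d = 0} := by
    ext x
    simp only [Set.mem_setOf_eq, Set.mem_image]
    constructor
    · intro hx
      refine ⟨x - d₀, ?_, by ring⟩
      have : φ x = b := hx
      rw [map_sub, this, hd₀, sub_self]
    · rintro ⟨y, hy, rfl⟩
      have : φ (y + d₀) = b := by rw [map_add, hy, hd₀, zero_add]
      exact this
  rw [hfiber, Set.ncard_image_of_injective _ (add_left_injective d₀)]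
  have : {d : F | φ d = 0} = ((φ.ker : AddSubgroup F) : Set F) := by
    ext d; simp [AddMonoidHom.mem_ker]
  rw [this, ← Nat.card_coe_set_eq]
  exact hKq
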